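/- For a probability density p on ℝ^d and nonnegative measurable functions F, ζ with ∫ζ = 1 and ζ > 0 a.e., one has (1/2)·∫ p(y)F(y)/ζ(y)^{2/d} dy ≥ (1/2)·(∫ (p(y)F(y))^{d/(d+2)} dy)^{(d+2)/d}, with equality when ζ(y) = (p(y)F(y))^{d/(d+2)} / ∫ (p(s)F(s))^{d/(d+2)} ds (assuming the normalizing integral is finite and positive). -/

import Mathlib

open MeasureTheory

/-- Vector case: for a probability density `p` on (a subset of) `ℝ^d`, a nonnegative
weight `F` and a point density `ζ` (probability density, positive a.e.),
`(1/2) ∫ p F / ζ^{2/d} ≥ (1/2) (∫ (p F)^{d/(d+2)})^{(d+2)/d}`, with equality for the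
normalized point density `ζ = (p F)^{d/(d+2)} / ∫ (p F)^{d/(d+2)}` (when the
normalizing integral is finite and positive). -/
theorem optimal_point_density_vector
    {d : ℕ} (hd : 1 ≤ d)
    (μ : Measure (EuclideanSpace ℝ (Fin d)))
    (p F ζ : EuclideanSpace ℝ (Fin d) → ENNReal)
    (hp : Measurable p) (hF : Measurable F) (hζ : Measurable ζ)
    (hp1 : ∫⁻ y, p y ∂μ = 1) (hζ1 : ∫⁻ y, ζ y ∂μ = 1)
    (hζpos : ∀ᵐ y ∂μ, 0 < ζ y) :
    (1 / 2 : ENNReal) * (∫⁻ y, (p y * F y) / (ζ y) ^ ((2 : ℝ) / d) ∂μ)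
      ≥ (1 / 2) * (∫⁻ y, (p y * F y) ^ ((d : ℝ) / (d + 2)) ∂μ) ^ (((d : ℝ) + 2) / d)
    ∧ ((0 < ∫⁻ y, (p y * F y) ^ ((d : ℝ) / (d + 2)) ∂μ) →
       (∫⁻ y, (p y * F y) ^ ((d : ℝ) / (d + 2)) ∂μ < ⊤) →
       (ζ = fun y => (p y * F y) ^ ((d : ℝ) / (d + 2))
              / ∫⁻ s, (p s * F s) ^ ((d : ℝ) / (d + 2)) ∂μ) →
       (1 / 2 : ENNReal) * (∫⁻ y, (p y * F y) / (ζ y) ^ ((2 : ℝ) / d) ∂μ)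
         = (1 / 2) * (∫⁻ y, (p y * F y) ^ ((d : ℝ) / (d + 2)) ∂μ)
             ^ (((d : ℝ) + 2) / d)) := by
  have hdR : (0:ℝ) < (d:ℝ) := by exact_mod_cast hd
  have hd2 : (0:ℝ) < (d:ℝ) + 2 := by linarith
  set a : ℝ := (d:ℝ) / ((d:ℝ) + 2) with ha_def
  have ha : 0 < a := div_pos hdR hd2
  set P : ℝ := ((d:ℝ) + 2) / (d:ℝ) with hP_def
  set Q : ℝ := ((d:ℝ) + 2) / 2 with hQ_def
  have hP : 0 < P := div_pos hd2 hdR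
  have haP : a * P = 1 := by rw [ha_def, hP_def]; field_simp
  have hPQ : Real.HolderConjugate P Q := by
    rw [Real.holderConjugate_iff]
    constructor
    · rw [hP_def, lt_div_iff₀ hdR]; linarith
    · rw [hP_def, hQ_def]; field_simp
  have hgm : Measurable fun y => p y * F y := hp.mul hF
  constructor
  · -- inequality
    have hζfin : ∀ᵐ y ∂μ, ζ y < ⊤ := ae_lt_top hζ (by rw [hζ1]; exact ENNReal.one_ne_top)
    set f : EuclideanSpace ℝ (Fin d) → ENNReal :=
      fun y => ((p y * F y) / ζ y ^ ((2:ℝ)/d)) ^ a with hf_def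
    set h : EuclideanSpace ℝ (Fin d) → ENNReal :=
      fun y => ζ y ^ ((2:ℝ)/((d:ℝ)+2)) with hh_def
    have hfm : Measurable f := ((hgm.div : _) (hζ.pow_const _)).pow_const _
    have hhm : Measurable h := hζ.pow_const _
    have key : ∀ᵐ y ∂μ, (p y * F y) ^ a = f y * h y := by
      filter_upwards [hζpos, hζfin] with y h1 h2
      have hz0 : ζ y ≠ 0 := h1.ne'
      have hzt : ζ y ≠ ⊤ := h2.ne
      have e1 : ((2:ℝ)/d) * a = (2:ℝ)/((d:ℝ)+2) := by
        rw [ha_def]; field_simp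
      have hc0 : ζ y ^ ((2:ℝ)/((d:ℝ)+2)) ≠ 0 := by
        simp [ENNReal.rpow_eq_zero_iff, hz0, hzt]
      have hct : ζ y ^ ((2:ℝ)/((d:ℝ)+2)) ≠ ⊤ :=
        ENNReal.rpow_ne_top_of_nonneg (by positivity) hzt
      simp only [hf_def, hh_def]
      rw [ENNReal.div_rpow_of_nonneg _ _ ha.le, ← ENNReal.rpow_mul, e1,
        ENNReal.div_mul_cancel hc0 hct]
    have step1 : (∫⁻ y, (p y * F y) ^ a ∂μ) ≤ (∫⁻ y, (p y * F y) / ζ y ^ ((2:ℝ)/d) ∂μ) ^ (1/P) := by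
      calc (∫⁻ y, (p y * F y) ^ a ∂μ) = ∫⁻ y, (f * h) y ∂μ := lintegral_congr_ae key
        _ ≤ (∫⁻ y, f y ^ P ∂μ) ^ (1/P) * (∫⁻ y, h y ^ Q ∂μ) ^ (1/Q) :=
            ENNReal.lintegral_mul_le_Lp_mul_Lq μ hPQ hfm.aemeasurable hhm.aemeasurable
        _ = (∫⁻ y, (p y * F y) / ζ y ^ ((2:ℝ)/d) ∂μ) ^ (1/P) * 1 := by
            congr 1
            · congr 1
              refine lintegral_congr fun y => ?_
              rw [hf_def, ← ENNReal.rpow_mul, haP, ENNReal.rpow_one]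
            · have e2 : ((2:ℝ)/((d:ℝ)+2)) * Q = 1 := by
                rw [hQ_def]; field_simp
              have : (∫⁻ y, h y ^ Q ∂μ) = 1 := by
                rw [← hζ1]
                refine lintegral_congr fun y => ?_
                rw [hh_def, ← ENNReal.rpow_mul, e2, ENNReal.rpow_one]
              rw [this, ENNReal.one_rpow]
        _ = (∫⁻ y, (p y * F y) / ζ y ^ ((2:ℝ)/d) ∂μ) ^ (1/P) := mul_one _
    have step2 : (∫⁻ y, (p y * F y) ^ a ∂μ) ^ P ≤ (∫⁻ y, (p y * F y) / ζ y ^ ((2:ℝ)/d) ∂μ) := by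
      have h2 := ENNReal.rpow_le_rpow step1 hP.le
      rwa [← ENNReal.rpow_mul, one_div, inv_mul_cancel₀ hP.ne', ENNReal.rpow_one] at h2
    exact mul_le_mul_right step2 _
  · -- equality case
    intro hI0 hIt hζeq
    set I : ENNReal := ∫⁻ y, (p y * F y) ^ a ∂μ with hI_def
    have hIne : I ≠ 0 := hI0.ne'
    have hInt : I ≠ ⊤ := hIt.ne
    have hgfin : ∀ᵐ y ∂μ, (p y * F y) < ⊤ := by
      have h4 := ae_lt_top ((hgm.pow_const a : Measurable fun y => (p y * F y) ^ a)) hInt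
      filter_upwards [h4] with y hy
      by_contra hc
      rw [not_lt, top_le_iff] at hc
      rw [hc, ENNReal.top_rpow_of_pos ha] at hy
      exact absurd hy (lt_irrefl _)
    have hgpos : ∀ᵐ y ∂μ, 0 < (p y * F y) := by
      filter_upwards [hζpos] with y hy
      rw [hζeq] at hy
      simp only at hy
      by_contra hc
      rw [not_lt, le_zero_iff] at hc
      simp only [hc, ENNReal.zero_rpow_of_pos ha, ENNReal.zero_div] at hy
      exact absurd hy (lt_irrefl _)
    have key2 : ∀ᵐ y ∂μ, (p y * F y) / ζ y ^ ((2:ℝ)/d) = (p y * F y) ^ a * I ^ ((2:ℝ)/d) := by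
      filter_upwards [hgfin, hgpos] with y h2 h1
      have hz0 : (p y * F y) ≠ 0 := h1.ne'
      have hzt : (p y * F y) ≠ ⊤ := h2.ne
      have hζy : ζ y = (p y * F y) ^ a * I⁻¹ := by
        rw [hζeq]; simp only [div_eq_mul_inv]
      have e1 : a * ((2:ℝ)/d) = (2:ℝ)/((d:ℝ)+2) := by
        rw [ha_def]; field_simp
      have hrw : ζ y ^ ((2:ℝ)/d) = (p y * F y) ^ ((2:ℝ)/((d:ℝ)+2)) * (I ^ ((2:ℝ)/d))⁻¹ := by
        rw [hζy, ENNReal.mul_rpow_of_ne_top (ENNReal.rpow_ne_top_of_nonneg ha.le hzt)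
          (by simp [hIne]), ← ENNReal.rpow_mul, e1, ENNReal.inv_rpow]
      have hb0 : (p y * F y) ^ ((2:ℝ)/((d:ℝ)+2)) ≠ 0 := by
        simp [ENNReal.rpow_eq_zero_iff, hz0, hzt]
      have hbt : (p y * F y) ^ ((2:ℝ)/((d:ℝ)+2)) ≠ ⊤ :=
        ENNReal.rpow_ne_top_of_nonneg (by positivity) hzt
      rw [hrw, div_eq_mul_inv, ENNReal.mul_inv (Or.inl hb0) (Or.inl hbt), inv_inv,
        ← mul_assoc]
      congr 1
      have e2 : (1:ℝ) + (-((2:ℝ)/((d:ℝ)+2))) = a := by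
        rw [ha_def]; field_simp; ring
      rw [← ENNReal.rpow_neg, ← e2, ENNReal.rpow_add _ _ hz0 hzt, ENNReal.rpow_one]
    have hfinal : (∫⁻ y, (p y * F y) / ζ y ^ ((2:ℝ)/d) ∂μ) = I ^ P := by
      rw [lintegral_congr_ae key2, lintegral_mul_const _ ((hgm.pow_const a : Measurable fun y => (p y * F y) ^ a)), ← hI_def]
      have e3 : (1:ℝ) + (2:ℝ)/d = P := by rw [hP_def]; field_simp
      rw [← e3, ENNReal.rpow_add _ _ hIne hInt, ENNReal.rpow_one]
    rw [hfinal]
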